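/- Let d1 > 0, d2 > 0, y⋆ > 0 with d1·d2 < 1/(4·y⋆²), KP ≥ 0, KI > 0, u0 ∈ ℝ, and set r := (1/2)·√(1 - 4·d1·d2·y⋆²). Then the PI closed-loop vector field f satisfies f(χ̄) = 0 if and only if χ̄ = χ̄^u or χ̄ = χ̄^s, where χ̄^u := ((1/(2·d1))·(1 - 2r), y⋆, (1 - d1·(1/(2·d1))·(1 - 2r) - u0·y⋆)/(KI·y⋆)) and χ̄^s := ((1/(2·d1))·(1 + 2r), y⋆, (1 - d1·(1/(2·d1))·(1 + 2r) - u0·y⋆)/(KI·y⋆)); that is, the closed-loop system has exactly two equilibrium points. -/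

import Mathlib

/-- with d1 > 0 (and the equilibrium existence condition) the PI
closed-loop system has exactly two equilibrium points. -/
theorem boost_pi_two_equilibria
    (d1 d2 ystar KP KI u0 : ℝ) (hd1 : 0 < d1) (hd2 : 0 < d2) (hy : 0 < ystar)
    (hcond : d1 * d2 < 1 / (4 * ystar ^ 2)) (hKP : 0 ≤ KP) (hKI : 0 < KI)
    (r : ℝ) (hr : r = (1 / 2) * Real.sqrt (1 - 4 * d1 * d2 * ystar ^ 2))
    (f : ℝ × ℝ × ℝ → ℝ × ℝ × ℝ)
    (hf : ∀ χ : ℝ × ℝ × ℝ,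
      f χ = (-d1 * χ.1 + 1 - (u0 + KI * χ.2.2 + KP * (ystar - χ.2.1)) * χ.2.1,
             -d2 * χ.2.1 + (u0 + KI * χ.2.2 + KP * (ystar - χ.2.1)) * χ.1,
             ystar - χ.2.1))
    (χu χs : ℝ × ℝ × ℝ)
    (hχu : χu = ((1 / (2 * d1)) * (1 - 2 * r), ystar,
      (1 - d1 * ((1 / (2 * d1)) * (1 - 2 * r)) - u0 * ystar) / (KI * ystar)))
    (hχs : χs = ((1 / (2 * d1)) * (1 + 2 * r), ystar,
      (1 - d1 * ((1 / (2 * d1)) * (1 + 2 * r)) - u0 * ystar) / (KI * ystar))) :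
    ∀ χ : ℝ × ℝ × ℝ, f χ = 0 ↔ (χ = χu ∨ χ = χs) := by
  have hy2 : (0:ℝ) < ystar ^ 2 := by positivity
  have hpos : (0:ℝ) ≤ 1 - 4 * d1 * d2 * ystar ^ 2 := by
    have h4 : (0:ℝ) < 4 * ystar ^ 2 := by positivity
    have := (lt_div_iff₀ h4).mp hcond
    nlinarith
  have hr2 : 4 * r ^ 2 = 1 - 4 * d1 * d2 * ystar ^ 2 := by
    rw [hr, mul_pow, Real.sq_sqrt hpos]; ring
  have hd1' : d1 ≠ 0 := ne_of_gt hd1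
  have hy' : ystar ≠ 0 := ne_of_gt hy
  have hKI' : KI ≠ 0 := ne_of_gt hKI
  rintro ⟨a, b, c⟩
  rw [hf, hχu, hχs]
  simp only [Prod.ext_iff, Prod.fst_zero, Prod.snd_zero]
  constructor
  · rintro ⟨h1, h2, h3⟩
    have hb : b = ystar := by linarith
    rw [hb] at h1 h2
    have hq : d1 * a ^ 2 - a + d2 * ystar ^ 2 = 0 := by
      linear_combination (-a) * h1 + (-ystar) * h2
    have hfac : (2 * d1 * a - (1 - 2 * r)) * (2 * d1 * a - (1 + 2 * r)) = 0 := by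
      linear_combination 4 * d1 * hq - hr2
    have hc : c = (1 - d1 * a - u0 * ystar) / (KI * ystar) := by
      field_simp
      linear_combination -h1
    rcases mul_eq_zero.mp hfac with h | h
    · left
      have ha : a = 1 / (2 * d1) * (1 - 2 * r) := by
        field_simp; linarith
      exact ⟨ha, hb, by rw [hc, ha]⟩
    · right
      have ha : a = 1 / (2 * d1) * (1 + 2 * r) := by
        field_simp; linarith
      exact ⟨ha, hb, by rw [hc, ha]⟩
  · rintro (⟨ha, hb, hc⟩ | ⟨ha, hb, hc⟩) <;>
      refine ⟨?_, ?_, ?_⟩ <;> simp only [ha, hb, hc] <;>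
      first
      | ring1
      | (field_simp; ring1)
      | (field_simp; linear_combination (-1) * hr2)
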